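/- Let (X,A) be a metric pair with X complete separable proper, p ∈ [1,∞), and μ ∈ M_p(X,A). For r > 0 let A_r = {x ∈ X : dist(x,A) ≤ r} and μ^r = μ restricted to X \ A_r. Then Wb_p(μ^r, μ)^p ≤ ∫_{A_r ∩ Ω} dist(x,A)^p dμ(x), and hence Wb_p(μ^r, μ) → 0 as r → 0. -/

import Mathlib

open MeasureTheory Metric Set ENNReal Filter

noncomputable def ptCost {X : Type*} [PseudoMetricSpace X] [MeasurableSpace X]
    (p : ℝ) (γ : Measure (X × X)) : ℝ≥0∞ :=
  ∫⁻ z, ENNReal.ofReal (dist z.1 z.2 ^ p) ∂γ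

def ptAdm {X : Type*} [MeasurableSpace X] (A : Set X) (μ ν : Measure X) :
    Set (Measure (X × X)) :=
  {γ | γ (A ×ˢ A) = 0 ∧ (γ.map Prod.fst).restrict Aᶜ = μ ∧ (γ.map Prod.snd).restrict Aᶜ = ν}

noncomputable def WbPow {X : Type*} [PseudoMetricSpace X] [MeasurableSpace X]
    (p : ℝ) (A : Set X) (μ ν : Measure X) : ℝ≥0∞ :=
  ⨅ γ ∈ ptAdm A μ ν, ptCost p γ

noncomputable def Wb {X : Type*} [PseudoMetricSpace X] [MeasurableSpace X]
    (p : ℝ) (A : Set X) (μ ν : Measure X) : ℝ≥0∞ :=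
  WbPow p A μ ν ^ (1 / p)

def MemMp {X : Type*} [PseudoMetricSpace X] [MeasurableSpace X] (p : ℝ) (A : Set X)
    (μ : Measure X) : Prop :=
  μ A = 0 ∧ IsLocallyFiniteMeasure μ ∧
    ∫⁻ x, ENNReal.ofReal (Metric.infDist x A ^ p) ∂μ ≠ ⊤

/-- An approximate measurable projection onto a closed set, with relative error `ε`. -/
lemma exists_approx_proj {X : Type*} [MetricSpace X] [TopologicalSpace.SeparableSpace X]
    [MeasurableSpace X] [BorelSpace X]
    (A : Set X) (hA : IsClosed A) (hne : A.Nonempty) {ε : ℝ} (hε : 0 < ε) :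
    ∃ f : X → X, Measurable f ∧ (∀ x, f x ∈ A) ∧
      ∀ x ∉ A, dist x (f x) ≤ (1 + ε) * infDist x A := by
  classical
  obtain ⟨t, htA, htc, htd⟩ :=
    (TopologicalSpace.IsSeparable.of_separableSpace A).exists_countable_dense_subset
  have htne : t.Nonempty := by
    rcases hne with ⟨x, hx⟩
    by_contra h
    rw [Set.not_nonempty_iff_eq_empty] at h
    subst h
    simpa using htd hx
  obtain ⟨a, ha⟩ := htc.exists_eq_range htne
  set P : X → ℕ → Prop := fun x n => dist x (a n) ≤ (1 + ε) * infDist x A ∨ x ∈ A with hP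
  have hex : ∀ x, ∃ n, P x n := by
    intro x
    by_cases hx : x ∈ A
    · exact ⟨0, Or.inr hx⟩
    · have hd0 : 0 < infDist x A := (hA.notMem_iff_infDist_pos hne).1 hx
      have hlt : infDist x A < (1 + ε) * infDist x A := by nlinarith
      obtain ⟨y, hyA, hy⟩ := (infDist_lt_iff hne).1 hlt
      have hyc : y ∈ closure t := htd hyA
      obtain ⟨z, hzt, hz⟩ := Metric.mem_closure_iff.1 hyc ((1 + ε) * infDist x A - dist x y)
        (by linarith)
      obtain ⟨n, rfl⟩ : ∃ n, a n = z := by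
        rw [ha] at hzt; exact hzt
      refine ⟨n, Or.inl ?_⟩
      have := dist_triangle x y (a n)
      linarith
  refine ⟨fun x => a (Nat.find (hex x)), ?_, ?_, ?_⟩
  · exact measurable_from_nat.comp
      (measurable_find hex fun n => by
        have h1 : MeasurableSet {x | dist x (a n) ≤ (1 + ε) * infDist x A} :=
          (isClosed_le (Continuous.dist continuous_id continuous_const)
            (continuous_const.mul (continuous_infDist_pt A))).measurableSet
        have : {x | P x n} = {x | dist x (a n) ≤ (1 + ε) * infDist x A} ∪ A := by
          ext x; simp [hP]
        rw [this]
        exact h1.union hA.measurableSet)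
  · intro x
    have : a (Nat.find (hex x)) ∈ range a := mem_range_self _
    rw [← ha] at this
    exact htA this
  · intro x hx
    rcases Nat.find_spec (hex x) with h | h
    · exact h
    · exact absurd h hx

/-- Key bound: cost of the plan built from the approximate projection. -/
lemma wbPow_le_aux
    {X : Type*} [MetricSpace X] [TopologicalSpace.SeparableSpace X]
    [MeasurableSpace X] [BorelSpace X]
    (A : Set X) (hA : IsClosed A) (hne : A.Nonempty)
    (p : ℝ) (hp : 1 ≤ p)
    (μ : Measure X) (hμA : μ A = 0) (r : ℝ) {ε : ℝ} (hε : 0 < ε) :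
    WbPow p A (μ.restrict {x | r < infDist x A}) μ ≤
      ENNReal.ofReal ((1 + ε) ^ p) *
        ∫⁻ x in {x | infDist x A ≤ r} ∩ Aᶜ, ENNReal.ofReal (infDist x A ^ p) ∂μ := by
  have hp0 : (0 : ℝ) < p := lt_of_lt_of_le one_pos hp
  haveI : SecondCountableTopology X :=
    UniformSpace.secondCountable_of_separable X
  obtain ⟨f, hfm, hfA, hfd⟩ := exists_approx_proj A hA hne hε
  set S : Set X := {x | r < infDist x A} with hSdef
  have hS : MeasurableSet S :=
    measurableSet_lt measurable_const (continuous_infDist_pt A).measurable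
  have hAm : MeasurableSet A := hA.measurableSet
  have hdiag : Measurable fun x : X => (x, x) := measurable_id.prodMk measurable_id
  have hpair : Measurable fun x : X => (f x, x) := hfm.prodMk measurable_id
  set γ : Measure (X × X) :=
    Measure.map (fun x => (x, x)) (μ.restrict S) +
      Measure.map (fun x => (f x, x)) (μ.restrict Sᶜ) with hγdef
  have hAc_ae : ∀ᵐ x ∂μ, x ∈ Aᶜ := compl_mem_ae_iff.mpr hμA
  -- admissibility
  have hγ : γ ∈ ptAdm A (μ.restrict S) μ := by
    refine ⟨?_, ?_, ?_⟩
    · rw [hγdef, Measure.add_apply,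
        Measure.map_apply hdiag (hAm.prod hAm),
        Measure.map_apply hpair (hAm.prod hAm)]
      have h1 : (fun x : X => (x, x)) ⁻¹' (A ×ˢ A) = A := by
        ext x; simp
      have h2 : (fun x : X => (f x, x)) ⁻¹' (A ×ˢ A) ⊆ A := by
        intro x hx; exact hx.2
      rw [h1]
      have e1 : μ.restrict S A = 0 :=
        le_antisymm ((Measure.restrict_apply hAm).le.trans
          (le_of_le_of_eq (measure_mono Set.inter_subset_left) hμA)) zero_le
      have e2 : μ.restrict Sᶜ ((fun x : X => (f x, x)) ⁻¹' (A ×ˢ A)) = 0 := by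
        refine measure_mono_null h2 ?_
        rw [Measure.restrict_apply hAm]
        exact le_antisymm (le_of_le_of_eq (measure_mono Set.inter_subset_left) hμA) zero_le
      rw [e1, e2, add_zero]
    · rw [hγdef, Measure.map_add _ _ measurable_fst, Measure.restrict_add,
        Measure.map_map measurable_fst hdiag, Measure.map_map measurable_fst hpair]
      have h1 : (Prod.fst ∘ fun x : X => (x, x)) = id := rfl
      have h2 : (Prod.fst ∘ fun x : X => (f x, x)) = f := rfl
      rw [h1, h2, Measure.map_id]
      have h3 : ((μ.restrict Sᶜ).map f).restrict Aᶜ = 0 := by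
        rw [Measure.restrict_eq_zero, Measure.map_apply hfm hAm.compl]
        have : f ⁻¹' Aᶜ = ∅ := by
          ext x; simp [hfA x]
        simp [this]
      rw [h3, add_zero, Measure.restrict_restrict hAm.compl]
      refine Measure.restrict_congr_set ?_
      filter_upwards [hAc_ae] with x hx
      exact propext (and_iff_right hx)
    · rw [hγdef, Measure.map_add _ _ measurable_snd, Measure.restrict_add,
        Measure.map_map measurable_snd hdiag, Measure.map_map measurable_snd hpair]
      have h1 : (Prod.snd ∘ fun x : X => (x, x)) = id := rfl
      have h2 : (Prod.snd ∘ fun x : X => (f x, x)) = id := rfl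
      rw [h1, h2, Measure.map_id, Measure.map_id, ← Measure.restrict_add,
        Measure.restrict_add_restrict_compl hS]
      have : (Aᶜ : Set X) =ᵐ[μ] (Set.univ : Set X) := by
        filter_upwards [hAc_ae] with x hx
        exact propext (iff_of_true hx trivial)
      rw [Measure.restrict_congr_set this, Measure.restrict_univ]
  -- cost estimate
  have hcont : Continuous fun z : X × X => ENNReal.ofReal (dist z.1 z.2 ^ p) :=
    ENNReal.continuous_ofReal.comp
      ((continuous_fst.dist continuous_snd).rpow_const fun z => Or.inr hp0.le)
  have hmeas : Measurable fun z : X × X => ENNReal.ofReal (dist z.1 z.2 ^ p) := hcont.measurable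
  have hcost : ptCost p γ =
      ∫⁻ x in Sᶜ, ENNReal.ofReal (dist (f x) x ^ p) ∂μ := by
    rw [hγdef]
    unfold ptCost
    rw [lintegral_add_measure, lintegral_map hmeas hdiag, lintegral_map hmeas hpair]
    have h0 : ∫⁻ x, ENNReal.ofReal (dist x x ^ p) ∂(μ.restrict S) = 0 := by
      simp [Real.zero_rpow (ne_of_gt hp0)]
    rw [h0, zero_add]
  have hScn : Sᶜ = {x | infDist x A ≤ r} := by
    ext x; simp [hSdef, not_lt]
  have hTae : ({x | infDist x A ≤ r} ∩ Aᶜ : Set X) =ᵐ[μ] {x | infDist x A ≤ r} := by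
    filter_upwards [hAc_ae] with x hx
    exact propext (and_iff_left hx)
  have hbound : ∫⁻ x in Sᶜ, ENNReal.ofReal (dist (f x) x ^ p) ∂μ ≤
      ENNReal.ofReal ((1 + ε) ^ p) *
        ∫⁻ x in {x | infDist x A ≤ r} ∩ Aᶜ, ENNReal.ofReal (infDist x A ^ p) ∂μ := by
    rw [hScn, ← Measure.restrict_congr_set hTae]
    have hTm : MeasurableSet ({x | infDist x A ≤ r} ∩ Aᶜ) :=
      (measurableSet_le (continuous_infDist_pt A).measurable measurable_const).inter hAm.compl
    calc ∫⁻ x in {x | infDist x A ≤ r} ∩ Aᶜ, ENNReal.ofReal (dist (f x) x ^ p) ∂μ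
        ≤ ∫⁻ x in {x | infDist x A ≤ r} ∩ Aᶜ,
            ENNReal.ofReal ((1 + ε) ^ p) * ENNReal.ofReal (infDist x A ^ p) ∂μ := by
          refine setLIntegral_mono' hTm fun x hx => ?_
          have h1 : dist (f x) x ≤ (1 + ε) * infDist x A := by
            rw [dist_comm]; exact hfd x hx.2
          have h2 : dist (f x) x ^ p ≤ ((1 + ε) * infDist x A) ^ p :=
            Real.rpow_le_rpow dist_nonneg h1 hp0.le
          rw [Real.mul_rpow (by positivity) infDist_nonneg] at h2
          calc ENNReal.ofReal (dist (f x) x ^ p)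
              ≤ ENNReal.ofReal ((1 + ε) ^ p * infDist x A ^ p) := ENNReal.ofReal_le_ofReal h2
            _ = ENNReal.ofReal ((1 + ε) ^ p) * ENNReal.ofReal (infDist x A ^ p) :=
                ENNReal.ofReal_mul (by positivity)
      _ = ENNReal.ofReal ((1 + ε) ^ p) *
            ∫⁻ x in {x | infDist x A ≤ r} ∩ Aᶜ, ENNReal.ofReal (infDist x A ^ p) ∂μ :=
          lintegral_const_mul' _ _ ENNReal.ofReal_ne_top
  calc WbPow p A (μ.restrict S) μ ≤ ptCost p γ := iInf₂_le γ hγ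
    _ = _ := hcost
    _ ≤ _ := hbound

theorem truncation_converges_in_wb
    {X : Type*} [MetricSpace X] [CompleteSpace X] [TopologicalSpace.SeparableSpace X]
    [ProperSpace X] [MeasurableSpace X] [BorelSpace X]
    (A : Set X) (hA : IsClosed A) (hne : A.Nonempty)
    (p : ℝ) (hp : 1 ≤ p)
    (μ : Measure X) (hμ : MemMp p A μ) :
    (∀ r : ℝ, 0 < r →
      WbPow p A (μ.restrict {x | r < infDist x A}) μ ≤
        ∫⁻ x in {x | infDist x A ≤ r} ∩ Aᶜ, ENNReal.ofReal (infDist x A ^ p) ∂μ) ∧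
    Tendsto (fun r : ℝ => Wb p A (μ.restrict {x | r < infDist x A}) μ)
      (nhdsWithin 0 (Set.Ioi 0)) (nhds 0) := by
  have hp0 : (0 : ℝ) < p := lt_of_lt_of_le one_pos hp
  -- Part 1
  have part1 : ∀ r : ℝ,
      WbPow p A (μ.restrict {x | r < infDist x A}) μ ≤
        ∫⁻ x in {x | infDist x A ≤ r} ∩ Aᶜ, ENNReal.ofReal (infDist x A ^ p) ∂μ := by
    intro r
    set I : ℝ≥0∞ := ∫⁻ x in {x | infDist x A ≤ r} ∩ Aᶜ, ENNReal.ofReal (infDist x A ^ p) ∂μ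
    have key : ∀ ε : ℝ, 0 < ε →
        WbPow p A (μ.restrict {x | r < infDist x A}) μ ≤ ENNReal.ofReal ((1 + ε) ^ p) * I :=
      fun ε hε => wbPow_le_aux A hA hne p hp μ hμ.1 r hε
    have hεn : ∀ n : ℕ, (0 : ℝ) < 1 / (n + 1) := fun n => by positivity
    have htend : Tendsto (fun n : ℕ => ENNReal.ofReal ((1 + 1 / (n + 1)) ^ p) * I)
        atTop (nhds I) := by
      have h1 : Tendsto (fun n : ℕ => (1 : ℝ) + 1 / (n + 1)) atTop (nhds 1) := by
        have : Tendsto (fun n : ℕ => 1 / ((n : ℝ) + 1)) atTop (nhds 0) :=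
          tendsto_one_div_add_atTop_nhds_zero_nat
        have h2 := tendsto_const_nhds (x := (1 : ℝ)) (f := atTop (α := ℕ)) |>.add this
        simpa using h2
      have h2 : Tendsto (fun n : ℕ => ENNReal.ofReal ((1 + 1 / (n + 1)) ^ p))
          atTop (nhds 1) := by
        have h3 : Tendsto (fun n : ℕ => ((1 : ℝ) + 1 / (n + 1)) ^ p) atTop (nhds 1) := by
          have := (Real.continuousAt_rpow_const 1 p (Or.inl one_ne_zero)).tendsto.comp h1
          simpa [Real.one_rpow, Function.comp_def] using this
        have := (ENNReal.continuous_ofReal.tendsto 1).comp h3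
        simpa [Function.comp_def] using this
      simpa using ENNReal.Tendsto.mul_const h2 (Or.inl one_ne_zero)
    exact ge_of_tendsto htend (Filter.Eventually.of_forall fun n => key _ (hεn n))
  refine ⟨fun r _ => part1 r, ?_⟩
  -- Part 2
  set g : X → ℝ≥0∞ := fun x => ENNReal.ofReal (infDist x A ^ p) with hg
  have hgm : Measurable g := by
    have : Continuous fun x => ENNReal.ofReal (infDist x A ^ p) :=
      ENNReal.continuous_ofReal.comp
        ((continuous_infDist_pt A).rpow_const fun x => Or.inr hp0.le)
    exact this.measurable
  set ν : Measure X := μ.withDensity g with hν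
  have hνtot : ν Set.univ ≠ ⊤ := by
    rw [hν, withDensity_apply _ MeasurableSet.univ, Measure.restrict_univ]
    exact hμ.2.2
  set T : ℕ → Set X := fun n => {x | infDist x A ≤ 1 / (n + 1)} ∩ Aᶜ with hT
  have hTm : ∀ n, MeasurableSet (T n) := fun n =>
    (measurableSet_le (continuous_infDist_pt A).measurable measurable_const).inter
      hA.measurableSet.compl
  have hTanti : Antitone T := by
    intro m n hmn x hx
    have hle : (1 : ℝ) / (n + 1) ≤ 1 / (m + 1) := by
      apply one_div_le_one_div_of_le (by positivity)
      have : (m : ℝ) ≤ n := Nat.cast_le.mpr hmn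
      linarith
    exact ⟨le_trans hx.1 hle, hx.2⟩
  have hTempty : (⋂ n, T n) = ∅ := by
    ext x
    simp only [Set.mem_iInter, Set.mem_empty_iff_false, iff_false]
    intro h
    have hx : x ∉ A := (h 0).2
    have hd0 : 0 < infDist x A := (hA.notMem_iff_infDist_pos hne).1 hx
    obtain ⟨n, hn⟩ := exists_nat_one_div_lt hd0
    exact absurd ((h n).1) (not_le.mpr hn)
  have hνT : Tendsto (fun n => ν (T n)) atTop (nhds 0) := by
    have := tendsto_measure_iInter_atTop (μ := ν)
      (fun n => (hTm n).nullMeasurableSet) hTanti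
      ⟨0, ne_top_of_le_ne_top hνtot (measure_mono (Set.subset_univ _))⟩
    rw [hTempty] at this
    simpa [Function.comp_def] using this
  rw [ENNReal.tendsto_nhds_zero]
  intro ε hε
  have hεp : (0 : ℝ≥0∞) < ε ^ p := by
    rcases eq_or_ne ε ⊤ with rfl | hεt
    · rw [ENNReal.top_rpow_of_pos hp0]; exact ENNReal.zero_lt_top
    · exact ENNReal.rpow_pos hε hεt
  obtain ⟨n, hn⟩ := (ENNReal.tendsto_nhds_zero.mp hνT (ε ^ p) hεp).exists
  have hmem : Set.Ioo (0 : ℝ) (1 / (n + 1)) ∈ nhdsWithin (0 : ℝ) (Set.Ioi 0) := by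
    apply Ioo_mem_nhdsGT_of_mem
    exact ⟨le_refl 0, by positivity⟩
  filter_upwards [hmem] with r hr
  have hIr : (∫⁻ x in {x | infDist x A ≤ r} ∩ Aᶜ, ENNReal.ofReal (infDist x A ^ p) ∂μ)
      ≤ ε ^ p := by
    have hsub : {x | infDist x A ≤ r} ∩ Aᶜ ⊆ T n := by
      intro x hx
      exact ⟨le_trans hx.1 hr.2.le, hx.2⟩
    have hrm : MeasurableSet ({x | infDist x A ≤ r} ∩ Aᶜ) :=
      (measurableSet_le (continuous_infDist_pt A).measurable measurable_const).inter
        hA.measurableSet.compl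
    have e1 : (∫⁻ x in {x | infDist x A ≤ r} ∩ Aᶜ, ENNReal.ofReal (infDist x A ^ p) ∂μ)
        = ν ({x | infDist x A ≤ r} ∩ Aᶜ) := (withDensity_apply _ hrm).symm
    have e2 : ν (T n) = ∫⁻ x in T n, g x ∂μ := withDensity_apply _ (hTm n)
    rw [e1]
    exact le_trans (measure_mono hsub) hn
  have hWb : Wb p A (μ.restrict {x | r < infDist x A}) μ ≤ (ε ^ p) ^ (1 / p) := by
    unfold Wb
    exact ENNReal.rpow_le_rpow (le_trans (part1 r) hIr) (by positivity)
  calc Wb p A (μ.restrict {x | r < infDist x A}) μ ≤ (ε ^ p) ^ (1 / p) := hWb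
    _ = ε := by
        rw [← ENNReal.rpow_mul, mul_one_div_cancel (ne_of_gt hp0), ENNReal.rpow_one]
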